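/- For each period s, the single-sample Hessian h_s(θ) of the MNL negative log-likelihood −log φ(I_s, S_s | e^θ) in θ can be written as h_s(θ) = (1 + Σ_{i∈S_s} e^{θ(i)})^{−2} · [ D + Σ_{i<j, i,j∈S_s} e^{θ(i)+θ(j)} (e_i − e_j)(e_i − e_j)^T ], where D is the diagonal matrix with entries e^{θ(i)}·1{i ∈ S_s}, and consequently h_s(θ) is positive semidefinite. -/

import Mathlib

/-- MNL choice probability with utilities `exp (θ i)`; `none` is the no-purchase option. -/
noncomputable def mnlProb {N : ℕ} (θ : Fin N → ℝ) (S : Finset (Fin N)) :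
    Option (Fin N) → ℝ
  | none => 1 / (1 + ∑ ℓ ∈ S, Real.exp (θ ℓ))
  | some i => Real.exp (θ i) / (1 + ∑ ℓ ∈ S, Real.exp (θ ℓ))

/-- The (i,j) second partial derivative of `f` at `θ`. -/
noncomputable def hessEntry {N : ℕ} (f : (Fin N → ℝ) → ℝ) (θ : Fin N → ℝ)
    (i j : Fin N) : ℝ :=
  fderiv ℝ (fun t => fderiv ℝ f t (Pi.single j 1)) θ (Pi.single i 1)

section Aux

open Real Matrix Finset

variable {N : ℕ}

/-- Derivative CLM of `t ↦ 1 + ∑ ℓ ∈ S, exp (t ℓ)`. -/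
noncomputable def Dmap (S : Finset (Fin N)) (t : Fin N → ℝ) : (Fin N → ℝ) →L[ℝ] ℝ :=
  ∑ ℓ ∈ S, Real.exp (t ℓ) • ContinuousLinearMap.proj ℓ

lemma Zpos (S : Finset (Fin N)) (t : Fin N → ℝ) :
    0 < 1 + ∑ ℓ ∈ S, Real.exp (t ℓ) := by positivity

lemma Dmap_single (S : Finset (Fin N)) (t : Fin N → ℝ) (j : Fin N) :
    Dmap S t (Pi.single j 1) = if j ∈ S then Real.exp (t j) else 0 := by
  simp only [Dmap, ContinuousLinearMap.coe_sum', Finset.sum_apply,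
    ContinuousLinearMap.coe_smul', Pi.smul_apply, ContinuousLinearMap.proj_apply,
    Pi.single_apply, smul_eq_mul, mul_ite, mul_one, mul_zero]
  simp [Finset.sum_ite_eq]

lemma hasFDerivAt_exp_apply (t : Fin N → ℝ) (j : Fin N) :
    HasFDerivAt (fun y : Fin N → ℝ => Real.exp (y j))
      (Real.exp (t j) • (ContinuousLinearMap.proj j : (Fin N → ℝ) →L[ℝ] ℝ)) t := by
  have := (Real.hasDerivAt_exp (t j)).comp_hasFDerivAt t
    ((ContinuousLinearMap.proj j : (Fin N → ℝ) →L[ℝ] ℝ).hasFDerivAt)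
  exact this

lemma hasFDerivAt_Z (S : Finset (Fin N)) (t : Fin N → ℝ) :
    HasFDerivAt (fun y : Fin N → ℝ => 1 + ∑ ℓ ∈ S, Real.exp (y ℓ)) (Dmap S t) t := by
  have : HasFDerivAt (fun y : Fin N → ℝ => ∑ ℓ ∈ S, Real.exp (y ℓ)) (Dmap S t) t :=
    HasFDerivAt.fun_sum fun ℓ _ => hasFDerivAt_exp_apply t ℓ
  simpa using this

lemma fderiv_logZ_single (S : Finset (Fin N)) (t : Fin N → ℝ) (j : Fin N) :
    fderiv ℝ (fun y : Fin N → ℝ => Real.log (1 + ∑ ℓ ∈ S, Real.exp (y ℓ)))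
        t (Pi.single j 1)
      = (if j ∈ S then Real.exp (t j) else 0) * (1 + ∑ ℓ ∈ S, Real.exp (t ℓ))⁻¹ := by
  rw [((hasFDerivAt_Z S t).log (Zpos S t).ne').fderiv]
  rw [ContinuousLinearMap.smul_apply, Dmap_single, smul_eq_mul]
  ring

/-- Second partials of `log Z`. -/
lemma hess_logZ (S : Finset (Fin N)) (θ : Fin N → ℝ) (i j : Fin N) :
    hessEntry (fun y : Fin N → ℝ => Real.log (1 + ∑ ℓ ∈ S, Real.exp (y ℓ))) θ i j
      = ((if i = j then (if i ∈ S then Real.exp (θ i) else 0) else 0)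
            * (1 + ∑ ℓ ∈ S, Real.exp (θ ℓ))
          - (if i ∈ S then Real.exp (θ i) else 0) * (if j ∈ S then Real.exp (θ j) else 0))
        / (1 + ∑ ℓ ∈ S, Real.exp (θ ℓ)) ^ 2 := by
  unfold hessEntry
  have hfn : (fun t : Fin N → ℝ =>
        fderiv ℝ (fun y : Fin N → ℝ => Real.log (1 + ∑ ℓ ∈ S, Real.exp (y ℓ)))
          t (Pi.single j 1))
      = fun t : Fin N → ℝ =>
          (if j ∈ S then Real.exp (t j) else 0) * (1 + ∑ ℓ ∈ S, Real.exp (t ℓ))⁻¹ :=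
    funext fun t => fderiv_logZ_single S t j
  rw [hfn]
  by_cases hj : j ∈ S
  · simp only [if_pos hj]
    have hinv : HasFDerivAt (fun t : Fin N → ℝ => (1 + ∑ ℓ ∈ S, Real.exp (t ℓ))⁻¹)
        ((-(((1 + ∑ ℓ ∈ S, Real.exp (θ ℓ)) ^ 2)⁻¹)) • Dmap S θ) θ :=
      (hasDerivAt_inv (Zpos S θ).ne').comp_hasFDerivAt θ (hasFDerivAt_Z S θ)
    have h := (hasFDerivAt_exp_apply θ j).fun_mul hinv
    rw [h.fderiv]
    simp only [ContinuousLinearMap.add_apply, ContinuousLinearMap.smul_apply,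
      Dmap_single, ContinuousLinearMap.proj_apply, Pi.single_apply, smul_eq_mul]
    have hZ : (1 + ∑ ℓ ∈ S, Real.exp (θ ℓ)) ≠ 0 := (Zpos S θ).ne'
    by_cases hij : i = j
    · subst hij
      simp only [if_pos rfl, if_pos hj, ↓reduceIte]
      field_simp
      ring
    · have hji : ¬ (j = i) := fun h => hij h.symm
      by_cases hi : i ∈ S
      · simp only [if_neg hij, if_neg hji, if_pos hi, if_pos hj]
        field_simp
        ring
      · simp only [if_neg hij, if_neg hji, if_neg hi]
        simp
  · simp only [if_neg hj, zero_mul]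
    simp only [fderiv_fun_const]
    by_cases hij : i = j
    · subst hij
      have hi : i ∉ S := hj
      simp [hi]
    · simp [hij]

lemma pairsum (S : Finset (Fin N)) (θ : Fin N → ℝ) (i j : Fin N) :
    ∑ p ∈ Finset.univ.filter
        (fun p : Fin N × Fin N => p.1 < p.2 ∧ p.1 ∈ S ∧ p.2 ∈ S),
      Real.exp (θ p.1 + θ p.2) *
        ((Pi.single p.1 1 - Pi.single p.2 1 : Fin N → ℝ) i *
         (Pi.single p.1 1 - Pi.single p.2 1 : Fin N → ℝ) j)
    = (if i = j then (if i ∈ S then Real.exp (θ i) else 0) else 0) *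
        (∑ ℓ ∈ S, Real.exp (θ ℓ))
      - (if i ∈ S then Real.exp (θ i) else 0) * (if j ∈ S then Real.exp (θ j) else 0) := by
  set u : Fin N → ℝ := fun k => if k ∈ S then Real.exp (θ k) else 0 with hu
  set E : ℝ := ∑ ℓ ∈ S, Real.exp (θ ℓ) with hE
  set g : Fin N × Fin N → ℝ := fun p =>
    Real.exp (θ p.1 + θ p.2) *
      ((Pi.single p.1 1 - Pi.single p.2 1 : Fin N → ℝ) i *
       (Pi.single p.1 1 - Pi.single p.2 1 : Fin N → ℝ) j) with hg
  have hP : Finset.univ.filter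
        (fun p : Fin N × Fin N => p.1 < p.2 ∧ p.1 ∈ S ∧ p.2 ∈ S)
      = (S ×ˢ S).filter (fun p => p.1 < p.2) := by
    ext p; simp [Finset.mem_filter, Finset.mem_product]; tauto
  have hswap : ∀ p : Fin N × Fin N, g p.swap = g p := by
    intro p
    simp only [hg, Prod.fst_swap, Prod.snd_swap, Pi.sub_apply, Pi.single_apply]
    rw [add_comm (θ p.2)]; ring
  have h1 : ∑ p ∈ (S ×ˢ S).filter (fun p => p.1 < p.2), g p
      = ∑ p ∈ (S ×ˢ S).filter (fun p => p.2 < p.1), g p := by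
    refine Finset.sum_nbij' (i := Prod.swap) (j := Prod.swap) ?_ ?_ ?_ ?_ ?_
    · intro p hp; simp only [Finset.mem_filter, Finset.mem_product] at hp ⊢
      exact ⟨⟨hp.1.2, hp.1.1⟩, hp.2⟩
    · intro p hp; simp only [Finset.mem_filter, Finset.mem_product] at hp ⊢
      exact ⟨⟨hp.1.2, hp.1.1⟩, hp.2⟩
    · intro p _; rfl
    · intro p _; rfl
    · intro p _; exact (hswap p).symm
  have h2 : ∑ p ∈ (S ×ˢ S).filter (fun p => p.2 < p.1), g p
      = ∑ p ∈ (S ×ˢ S).filter (fun p => ¬ p.1 < p.2), g p := by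
    refine Finset.sum_subset ?_ ?_
    · intro p hp; simp only [Finset.mem_filter] at hp ⊢; exact ⟨hp.1, asymm hp.2⟩
    · intro p hp hnp
      simp only [Finset.mem_filter] at hp hnp
      have hpp : p.1 = p.2 := le_antisymm (not_lt.1 (fun h => hnp ⟨hp.1, h⟩))
        (not_lt.1 hp.2)
      rw [hg]; simp only [hpp, sub_self]
      simp
  have h3 : ∑ p ∈ S ×ˢ S, g p
      = ∑ p ∈ (S ×ˢ S).filter (fun p => p.1 < p.2), g p
        + ∑ p ∈ (S ×ˢ S).filter (fun p => ¬ p.1 < p.2), g p :=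
    (Finset.sum_filter_add_sum_filter_not _ _ _).symm
  have hdouble : ∑ p ∈ S ×ˢ S, g p
      = 2 * ((if i = j then u i else 0) * E - u i * u j) := by
    rw [Finset.sum_product]
    have inner : ∀ a ∈ S, (∑ b ∈ S, g (a, b))
        = Real.exp (θ a) * ((if i = a then 1 else 0) * (if j = a then 1 else 0) * E
            - (if i = a then 1 else 0) * u j - (if j = a then 1 else 0) * u i
            + (if i = j then u i else 0)) := by
      intro a _
      have step : ∀ b ∈ S, g (a, b)
          = Real.exp (θ a) * ((if i = a then 1 else 0) * (if j = a then 1 else 0)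
              * Real.exp (θ b)
            - (if i = a then 1 else 0) * (if j = b then Real.exp (θ b) else 0)
            - (if j = a then 1 else 0) * (if i = b then Real.exp (θ b) else 0)
            + (if i = b then (if j = b then Real.exp (θ b) else 0) else 0)) := by
        intro b _
        simp only [hg, Pi.sub_apply, Pi.single_apply, Real.exp_add]
        split_ifs <;> ring
      rw [Finset.sum_congr rfl step, ← Finset.mul_sum]
      congr 1
      rw [Finset.sum_add_distrib, Finset.sum_sub_distrib, Finset.sum_sub_distrib,
        ← Finset.mul_sum, ← Finset.mul_sum, ← Finset.mul_sum]
      have w1 : ∑ b ∈ S, (if j = b then Real.exp (θ b) else 0) = u j := by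
        rw [Finset.sum_ite_eq S j (fun b => Real.exp (θ b))]
      have w2 : ∑ b ∈ S, (if i = b then Real.exp (θ b) else 0) = u i := by
        rw [Finset.sum_ite_eq S i (fun b => Real.exp (θ b))]
      have w4 : ∑ b ∈ S, (if i = b then (if j = b then Real.exp (θ b) else 0) else 0)
          = if i = j then u i else 0 := by
        rw [Finset.sum_ite_eq S i (fun b => if j = b then Real.exp (θ b) else 0)]
        by_cases hij : i = j
        · subst hij; simp [hu]
        · simp [hu, Ne.symm hij, hij]
      rw [w1, w2, w4, ← hE]
    rw [Finset.sum_congr rfl inner]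
    simp only [mul_add, mul_sub, Finset.sum_add_distrib, Finset.sum_sub_distrib]
    have e1 : ∑ a ∈ S, Real.exp (θ a) * ((if i = a then 1 else 0) * (if j = a then 1 else 0) * E)
        = (if i = j then u i else 0) * E := by
      have : ∀ a ∈ S, Real.exp (θ a) * ((if i = a then 1 else 0) * (if j = a then 1 else 0) * E)
          = if i = a then ((if j = a then Real.exp (θ a) else 0) * E) else 0 := by
        intro a _; split_ifs <;> ring
      rw [Finset.sum_congr rfl this, Finset.sum_ite_eq S i]
      by_cases hij : i = j
      · subst hij; by_cases hi : i ∈ S <;> simp [hu, hi]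
      · by_cases hi : i ∈ S <;> simp [hu, hi, Ne.symm hij, hij]
    have e2 : ∑ a ∈ S, Real.exp (θ a) * ((if i = a then 1 else 0) * u j) = u i * u j := by
      have : ∀ a ∈ S, Real.exp (θ a) * ((if i = a then 1 else 0) * u j)
          = if i = a then Real.exp (θ a) * u j else 0 := by
        intro a _; split_ifs <;> ring
      rw [Finset.sum_congr rfl this, Finset.sum_ite_eq S i]
      by_cases hi : i ∈ S <;> simp [hu, hi]
    have e3 : ∑ a ∈ S, Real.exp (θ a) * ((if j = a then 1 else 0) * u i) = u j * u i := by
      have : ∀ a ∈ S, Real.exp (θ a) * ((if j = a then 1 else 0) * u i)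
          = if j = a then Real.exp (θ a) * u i else 0 := by
        intro a _; split_ifs <;> ring
      rw [Finset.sum_congr rfl this, Finset.sum_ite_eq S j]
      by_cases hj : j ∈ S <;> simp [hu, hj]
    have e4 : ∑ a ∈ S, Real.exp (θ a) * (if i = j then u i else 0)
        = (if i = j then u i else 0) * E := by
      rw [← Finset.sum_mul, hE]; ring
    rw [e1, e2, e3, e4]; ring
  have key : ∑ p ∈ (S ×ˢ S).filter (fun p => p.1 < p.2), g p
      = (if i = j then u i else 0) * E - u i * u j := by
    have := hdouble
    rw [h3, ← h2, ← h1] at this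
    linarith
  rw [hP]
  exact key

lemma psd_vecMulVec (v : Fin N → ℝ) : (Matrix.vecMulVec v v).PosSemidef := by
  refine Matrix.PosSemidef.of_dotProduct_mulVec_nonneg ?_ ?_
  · ext i j
    simp [Matrix.conjTranspose_apply, Matrix.vecMulVec_apply, mul_comm]
  · intro x
    have h : dotProduct (star x) (Matrix.vecMulVec v v *ᵥ x)
        = (∑ k, v k * x k) * (∑ k, v k * x k) := by
      simp only [dotProduct, Matrix.mulVec, Matrix.vecMulVec_apply,
        Pi.star_apply, star_trivial]
      rw [Finset.sum_mul_sum]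
      refine Finset.sum_congr rfl fun a _ => ?_
      rw [Finset.mul_sum]
      refine Finset.sum_congr rfl fun b _ => ?_
      ring
    rw [h]
    exact mul_self_nonneg _

lemma psd_smul {M : Matrix (Fin N) (Fin N) ℝ} (hM : M.PosSemidef) {c : ℝ} (hc : 0 ≤ c) :
    (c • M).PosSemidef := by
  refine Matrix.PosSemidef.of_dotProduct_mulVec_nonneg ?_ ?_
  · show (c • M)ᴴ = c • M
    rw [Matrix.conjTranspose_smul, hM.1.eq, star_trivial]
  · intro x
    rw [Matrix.smul_mulVec, dotProduct_smul, smul_eq_mul]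
    exact mul_nonneg hc (hM.dotProduct_mulVec_nonneg x)

lemma psd_sum {s : Finset (Fin N × Fin N)} {f : Fin N × Fin N → Matrix (Fin N) (Fin N) ℝ}
    (hf : ∀ p ∈ s, (f p).PosSemidef) : (∑ p ∈ s, f p).PosSemidef :=
  Finset.sum_induction f _ (fun _ _ ha hb => ha.add hb) Matrix.PosSemidef.zero hf

end Aux

/-- Single-sample Hessian of the MNL negative log-likelihood: explicit rank-one
decomposition and positive semidefiniteness. -/
theorem mnl_single_sample_hessian (N : ℕ) (S : Finset (Fin N)) (I : Option (Fin N))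
    (hI : ∀ i : Fin N, I = some i → i ∈ S) (θ : Fin N → ℝ) :
    (Matrix.of fun i j : Fin N =>
        hessEntry (fun θ' => -Real.log (mnlProb θ' S I)) θ i j)
      = (1 + ∑ ℓ ∈ S, Real.exp (θ ℓ)) ^ (-2 : ℤ) •
        (Matrix.diagonal (fun i : Fin N => Real.exp (θ i) * (if i ∈ S then 1 else 0))
          + ∑ p ∈ Finset.univ.filter
              (fun p : Fin N × Fin N => p.1 < p.2 ∧ p.1 ∈ S ∧ p.2 ∈ S),
            Real.exp (θ p.1 + θ p.2) •
              Matrix.vecMulVec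
                ((Pi.single p.1 1 - Pi.single p.2 1 : Fin N → ℝ))
                ((Pi.single p.1 1 - Pi.single p.2 1 : Fin N → ℝ)))
    ∧ (Matrix.of fun i j : Fin N =>
        hessEntry (fun θ' => -Real.log (mnlProb θ' S I)) θ i j).PosSemidef := by
  have hZ : (1 + ∑ ℓ ∈ S, Real.exp (θ ℓ)) ≠ 0 := (Zpos S θ).ne'
  have hentry : ∀ i j : Fin N,
      hessEntry (fun θ' => -Real.log (mnlProb θ' S I)) θ i j
        = ((if i = j then (if i ∈ S then Real.exp (θ i) else 0) else 0)
              * (1 + ∑ ℓ ∈ S, Real.exp (θ ℓ))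
            - (if i ∈ S then Real.exp (θ i) else 0)
              * (if j ∈ S then Real.exp (θ j) else 0))
          / (1 + ∑ ℓ ∈ S, Real.exp (θ ℓ)) ^ 2 := by
    intro i j
    cases I with
    | none =>
      have hfn : (fun θ' : Fin N → ℝ => -Real.log (mnlProb θ' S none))
          = fun y : Fin N → ℝ => Real.log (1 + ∑ ℓ ∈ S, Real.exp (y ℓ)) := by
        funext t
        simp only [mnlProb, one_div, Real.log_inv, neg_neg]
      rw [hfn]
      exact hess_logZ S θ i j
    | some i₀ =>
      have hfn : (fun θ' : Fin N → ℝ => -Real.log (mnlProb θ' S (some i₀)))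
          = fun y : Fin N → ℝ => -(y i₀)
              + Real.log (1 + ∑ ℓ ∈ S, Real.exp (y ℓ)) := by
        funext t
        simp only [mnlProb]
        rw [Real.log_div (Real.exp_ne_zero _) (Zpos S t).ne', Real.log_exp]
        ring
      rw [hfn]
      have inner_eq : (fun t : Fin N → ℝ =>
            fderiv ℝ (fun y : Fin N → ℝ => -(y i₀)
              + Real.log (1 + ∑ ℓ ∈ S, Real.exp (y ℓ))) t (Pi.single j 1))
          = fun t : Fin N → ℝ =>
              -((Pi.single j 1 : Fin N → ℝ) i₀)
                + fderiv ℝ (fun y : Fin N → ℝ =>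
                    Real.log (1 + ∑ ℓ ∈ S, Real.exp (y ℓ))) t (Pi.single j 1) := by
        funext t
        have h1 : HasFDerivAt (fun y : Fin N → ℝ => -(y i₀))
            (-(ContinuousLinearMap.proj i₀ : (Fin N → ℝ) →L[ℝ] ℝ)) t :=
          ((ContinuousLinearMap.proj i₀ : (Fin N → ℝ) →L[ℝ] ℝ).hasFDerivAt).neg
        have h2 := (hasFDerivAt_Z S t).log (Zpos S t).ne'
        rw [(h1.fun_add h2).fderiv, h2.fderiv]
        simp
      unfold hessEntry
      rw [inner_eq, fderiv_const_add]
      exact hess_logZ S θ i j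
  have hmat : (Matrix.of fun i j : Fin N =>
        hessEntry (fun θ' => -Real.log (mnlProb θ' S I)) θ i j)
      = (1 + ∑ ℓ ∈ S, Real.exp (θ ℓ)) ^ (-2 : ℤ) •
        (Matrix.diagonal (fun i : Fin N => Real.exp (θ i) * (if i ∈ S then 1 else 0))
          + ∑ p ∈ Finset.univ.filter
              (fun p : Fin N × Fin N => p.1 < p.2 ∧ p.1 ∈ S ∧ p.2 ∈ S),
            Real.exp (θ p.1 + θ p.2) •
              Matrix.vecMulVec
                ((Pi.single p.1 1 - Pi.single p.2 1 : Fin N → ℝ))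
                ((Pi.single p.1 1 - Pi.single p.2 1 : Fin N → ℝ))) := by
    ext i j
    rw [Matrix.of_apply, hentry i j, Matrix.smul_apply, Matrix.add_apply,
      Matrix.diagonal_apply, Matrix.sum_apply]
    have hsum : ∑ p ∈ Finset.univ.filter
          (fun p : Fin N × Fin N => p.1 < p.2 ∧ p.1 ∈ S ∧ p.2 ∈ S),
        (Real.exp (θ p.1 + θ p.2) •
          Matrix.vecMulVec
            ((Pi.single p.1 1 - Pi.single p.2 1 : Fin N → ℝ))
            ((Pi.single p.1 1 - Pi.single p.2 1 : Fin N → ℝ))) i j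
        = ∑ p ∈ Finset.univ.filter
            (fun p : Fin N × Fin N => p.1 < p.2 ∧ p.1 ∈ S ∧ p.2 ∈ S),
          Real.exp (θ p.1 + θ p.2) *
            ((Pi.single p.1 1 - Pi.single p.2 1 : Fin N → ℝ) i *
             (Pi.single p.1 1 - Pi.single p.2 1 : Fin N → ℝ) j) := by
      refine Finset.sum_congr rfl fun p _ => ?_
      rw [Matrix.smul_apply, Matrix.vecMulVec_apply, smul_eq_mul]
    rw [hsum, pairsum S θ i j]
    have hz2 : (1 + ∑ ℓ ∈ S, Real.exp (θ ℓ)) ^ (-2:ℤ)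
        = ((1 + ∑ ℓ ∈ S, Real.exp (θ ℓ)) ^ 2)⁻¹ := by
      rw [zpow_neg, zpow_two, sq]
    rw [hz2, smul_eq_mul]
    by_cases hij : i = j
    · subst hij
      by_cases hi : i ∈ S
      · simp only [if_pos rfl, if_pos hi, mul_one]
        field_simp
        ring
      · simp only [if_pos rfl, if_neg hi, mul_zero, zero_mul, mul_zero]
        simp
    · simp only [if_neg hij]
      field_simp
      ring
  refine ⟨hmat, ?_⟩
  rw [hmat]
  refine psd_smul ?_ (zpow_nonneg (Zpos S θ).le _)
  refine Matrix.PosSemidef.add (Matrix.PosSemidef.diagonal fun i => ?_)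
    (psd_sum fun p _ => psd_smul (psd_vecMulVec _) (Real.exp_pos _).le)
  have := Real.exp_nonneg (θ i)
  split_ifs <;> simp [this]
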